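/- Let z₁,...,z_N be distinct complex numbers on the unit circle and c₁,...,c_N nonzero complex numbers. Then for every δ > 0 there exist infinitely many positive integers q with |∑_{j=1}^N c_j z_j^q| > e^{−πqδ}. Equivalently, if |∑_j c_j z_j^q| ≤ e^{−πqδ} for all sufficiently large q, then all c_j = 0. -/

import Mathlib

open Finset

/-- If z₁,...,z_N are distinct points on the unit circle and
c₁,...,c_N are nonzero complex numbers, then for every δ > 0 there are
infinitely many positive integers q with |∑_j c_j z_j^q| > e^{−πqδ}. -/
theorem stmt19 (N : ℕ) (hN : 0 < N) (z : Fin N → ℂ)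
    (hinj : Function.Injective z) (hcirc : ∀ j, ‖z j‖ = 1)
    (c : Fin N → ℂ) (hc : ∀ j, c j ≠ 0) (δ : ℝ) (hδ : 0 < δ) :
    {q : ℕ | 0 < q ∧
      Real.exp (-(Real.pi) * q * δ) < ‖∑ j, c j * z j ^ q‖}.Infinite := by
  by_contra hfin
  rw [Set.not_infinite] at hfin
  obtain ⟨Q, hQ⟩ := hfin.bddAbove
  -- the Vandermonde matrix is invertible
  set M := Matrix.vandermonde z with hMdef
  have hdet : M.det ≠ 0 := by
    rw [hMdef, Matrix.det_vandermonde]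
    refine Finset.prod_ne_zero_iff.2 fun i _ => Finset.prod_ne_zero_iff.2 fun j hj => ?_
    rw [Finset.mem_Ioi] at hj
    exact sub_ne_zero.2 fun h => absurd (hinj h) (ne_of_gt hj)
  set j₀ : Fin N := ⟨0, hN⟩ with hj₀def
  set a : Fin N → ℂ := M⁻¹.mulVec ((Pi.single j₀ 1 : Fin N → ℂ)) with hadef
  have ha : M.mulVec a = (Pi.single j₀ 1 : Fin N → ℂ) := by
    rw [hadef, Matrix.mulVec_mulVec, Matrix.mul_nonsing_inv _ (isUnit_iff_ne_zero.2 hdet),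
      Matrix.one_mulVec]
  have ha' : ∀ j, (∑ i : Fin N, z j ^ (i : ℕ) * a i) = (Pi.single j₀ 1 : Fin N → ℂ) j := by
    intro j
    have := congrFun ha j
    simpa [Matrix.mulVec, dotProduct, hMdef, Matrix.vandermonde] using this
  -- key identity
  have key : ∀ q : ℕ,
      (∑ i : Fin N, a i * ∑ j, c j * z j ^ (q + (i : ℕ))) = c j₀ * z j₀ ^ q := by
    intro q
    have : (∑ i : Fin N, a i * ∑ j, c j * z j ^ (q + (i : ℕ)))
        = ∑ j, c j * z j ^ q * ∑ i : Fin N, z j ^ (i : ℕ) * a i := by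
      simp only [Finset.mul_sum]
      rw [Finset.sum_comm]
      refine Finset.sum_congr rfl fun j _ => Finset.sum_congr rfl fun i _ => ?_
      rw [pow_add]; ring
    rw [this]
    have : (∑ j, c j * z j ^ q * ∑ i : Fin N, z j ^ (i : ℕ) * a i)
        = ∑ j, c j * z j ^ q * (Pi.single j₀ 1 : Fin N → ℂ) j := by
      refine Finset.sum_congr rfl fun j _ => by rw [ha' j]
    rw [this]
    simp [Pi.single_apply]
  set A : ℝ := ∑ i : Fin N, ‖a i‖ with hAdef
  have hA0 : 0 ≤ A := Finset.sum_nonneg fun i _ => norm_nonneg _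
  -- eventual bound on |c j₀|
  have hbound : ∀ q : ℕ, Q + 1 ≤ q →
      ‖c j₀‖ ≤ A * Real.exp (-(Real.pi) * q * δ) := by
    intro q hq
    have hz : ‖c j₀‖ = ‖c j₀ * z j₀ ^ q‖ := by
      rw [norm_mul, norm_pow, hcirc, one_pow, mul_one]
    rw [hz, ← key q]
    calc ‖∑ i : Fin N, a i * ∑ j, c j * z j ^ (q + (i : ℕ))‖
        ≤ ∑ i : Fin N, ‖a i * ∑ j, c j * z j ^ (q + (i : ℕ))‖ :=
          norm_sum_le _ _
      _ ≤ ∑ i : Fin N, ‖a i‖ * Real.exp (-(Real.pi) * q * δ) := by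
          refine Finset.sum_le_sum fun i _ => ?_
          rw [norm_mul]
          refine mul_le_mul_of_nonneg_left ?_ (norm_nonneg _)
          have hmem : q + (i : ℕ) ∉ {q : ℕ | 0 < q ∧
              Real.exp (-(Real.pi) * q * δ) < ‖∑ j, c j * z j ^ q‖} := by
            intro hmem
            have := hQ hmem
            omega
          have hpos : 0 < q + (i : ℕ) := by omega
          have h1 : ‖∑ j, c j * z j ^ (q + (i : ℕ))‖
              ≤ Real.exp (-(Real.pi) * (q + (i : ℕ)) * δ) := by
            by_contra hlt
            exact hmem ⟨hpos, by push_neg at hlt; exact_mod_cast hlt⟩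
          refine h1.trans (Real.exp_le_exp.2 ?_)
          have : (0:ℝ) ≤ (i : ℕ) := by positivity
          nlinarith [Real.pi_pos, hδ, mul_nonneg (mul_nonneg Real.pi_pos.le this) hδ.le]
      _ = A * Real.exp (-(Real.pi) * q * δ) := by rw [hAdef, Finset.sum_mul]
  have hc0 : 0 < ‖c j₀‖ := norm_pos_iff.2 (hc j₀)
  -- the bound tends to 0
  have hexp : ∀ q : ℕ, Real.exp (-(Real.pi) * q * δ) = Real.exp (-(Real.pi * δ)) ^ q := by
    intro q
    rw [← Real.exp_nat_mul]
    ring_nf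
  have htend : Filter.Tendsto (fun q : ℕ => A * Real.exp (-(Real.pi) * q * δ))
      Filter.atTop (nhds 0) := by
    simp only [hexp]
    have h1 : Filter.Tendsto (fun q : ℕ => Real.exp (-(Real.pi * δ)) ^ q)
        Filter.atTop (nhds 0) := by
      refine tendsto_pow_atTop_nhds_zero_of_lt_one (Real.exp_nonneg _) ?_
      exact (Real.exp_lt_one_iff.2 (by nlinarith [Real.pi_pos]))
    simpa using h1.const_mul A
  have := ((htend.eventually (gt_mem_nhds hc0)).and (Filter.eventually_ge_atTop (Q + 1))).exists
  obtain ⟨q, hlt, hge⟩ := this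
  exact absurd (hbound q hge) (not_le.2 hlt)
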